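/- Let f4 be the binary morphism with f4(0)=0, f4(1)=1000010011, let t be the Thue–Morse word, and let w4 = f4(t). Then the factor 011 occurs in w4 only as a suffix of an occurrence of f4(1); formally, if p·011 is a prefix of w4, then p·011 = f4(s·1) for some prefix s·1 of t. -/

import Mathlib

def tm : ℕ → Fin 2 := fun n => if (Nat.digits 2 n).sum % 2 = 0 then 0 else 1

def tmPrefix (n : ℕ) : List (Fin 2) := (List.range n).map tm

/-- The morphism `f4(0) = 0`, `f4(1) = 1000010011`. -/
def f4 : Fin 2 → List (Fin 2) :=
  fun a => if a = 0 then [0] else [1, 0, 0, 0, 0, 1, 0, 0, 1, 1]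

/-- `u` is a (finite) prefix of the Thue–Morse word. -/
def IsPrefT (u : List (Fin 2)) : Prop := u = tmPrefix u.length

/-- `p` is a (finite) prefix of `w4 = f4(t)`. -/
def IsPrefW4 (p : List (Fin 2)) : Prop := ∃ n, p <+: (tmPrefix n).flatMap f4


lemma bind_nil' : ([] : List (Fin 2)).flatMap f4 = [] := rfl

lemma bind_cons' (a : Fin 2) (l : List (Fin 2)) :
    (a :: l).flatMap f4 = f4 a ++ l.flatMap f4 := rfl

lemma bind_append' (l1 l2 : List (Fin 2)) :
    (l1 ++ l2).flatMap f4 = l1.flatMap f4 ++ l2.flatMap f4 := by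
  simp [List.flatMap_append]

lemma concat_cancel {l1 l2 : List (Fin 2)} {a b : Fin 2} (h : l1 ++ [a] = l2 ++ [b]) :
    a = b ∧ l1 = l2 := by
  have := List.append_inj' h rfl
  exact ⟨by simpa using this.2, this.1⟩

lemma suffix_right {s X r : List (Fin 2)} (h : s <:+ X ++ r) (hl : s.length ≤ r.length) :
    s <:+ r := by
  rw [← List.reverse_prefix] at h ⊢
  rw [List.reverse_append] at h
  have h2 : s.reverse = (r.reverse ++ X.reverse).take s.reverse.length :=
    List.prefix_iff_eq_take.1 h
  rw [List.take_append_of_le_length (by simpa using hl)] at h2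
  exact h2 ▸ List.take_prefix _ _

lemma bind_ne_suffix01 (l : List (Fin 2)) : ¬ [0, 1] <:+ l.flatMap f4 := by
  induction l using List.reverseRecOn with
  | nil => simp
  | append_singleton l a ih =>
    rintro ⟨c, hc⟩
    rw [bind_append'] at hc
    have h01 : a = 0 ∨ a = 1 := by omega
    rcases h01 with rfl | rfl
    · simp only [bind_cons', bind_nil', f4] at hc
      have : (c ++ [0]) ++ [1] = (l.flatMap f4) ++ [0] := by simpa using hc
      exact absurd (concat_cancel this).1 (by decide)
    · simp only [bind_cons', bind_nil', f4] at hc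
      have : (c ++ [0]) ++ [1] =
          ((l.flatMap f4) ++ [1, 0, 0, 0, 0, 1, 0, 0, 1]) ++ [1] := by
        simpa using hc
      have h2 := (concat_cancel this).2
      have : c ++ [0] = ((l.flatMap f4) ++ [1, 0, 0, 0, 0, 1, 0, 0]) ++ [1] := by
        simpa using h2
      exact absurd (concat_cancel this).1 (by decide)

lemma decomp : ∀ (l : List (Fin 2)) (q : List (Fin 2)), q <+: l.flatMap f4 →
    ∃ l₁ l₂, l = l₁ ++ l₂ ∧ (q = l₁.flatMap f4 ∨
      ∃ a l₂' r, l₂ = a :: l₂' ∧ r <+: f4 a ∧ r.length < (f4 a).length ∧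
        q = l₁.flatMap f4 ++ r) := by
  intro l
  induction l with
  | nil =>
    intro q hq
    simp only [bind_nil', List.prefix_nil] at hq
    exact ⟨[], [], rfl, Or.inl (by simp [hq])⟩
  | cons a l ih =>
    intro q hq
    rw [bind_cons'] at hq
    by_cases hlen : q.length < (f4 a).length
    · refine ⟨[], a :: l, rfl, Or.inr ⟨a, l, q, rfl, ?_, hlen, by simp⟩⟩
      have h2 : q = ((f4 a) ++ l.flatMap f4).take q.length := List.prefix_iff_eq_take.1 hq
      rw [List.take_append_of_le_length (le_of_lt hlen)] at h2
      exact h2 ▸ List.take_prefix _ _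
    · push_neg at hlen
      have hfa : f4 a <+: q :=
        List.prefix_of_prefix_length_le (List.prefix_append _ _) hq hlen
      obtain ⟨q', rfl⟩ := hfa
      have hq' : q' <+: l.flatMap f4 := by
        rwa [List.prefix_append_right_inj] at hq
      obtain ⟨l₁, l₂, hsplit, hrest⟩ := ih q' hq'
      refine ⟨a :: l₁, l₂, by simp [hsplit], ?_⟩
      rcases hrest with h | ⟨b, l₂', r, h1, h2, h3, h4⟩
      · exact Or.inl (by simp [bind_cons', h])
      · exact Or.inr ⟨b, l₂', r, h1, h2, h3, by simp [bind_cons', h4]⟩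

lemma tmPrefix_succ (k : ℕ) : tmPrefix (k + 1) = tmPrefix k ++ [tm k] := by
  simp [tmPrefix, List.range_succ]

lemma tmPrefix_take {m n : ℕ} (h : m ≤ n) : (tmPrefix n).take m = tmPrefix m := by
  simp [tmPrefix, ← List.map_take, List.take_range, Nat.min_eq_left h]

lemma main_case (p l₁ : List (Fin 2)) (hpref : l₁ = tmPrefix l₁.length)
    (hq : p ++ [0, 1, 1] = l₁.flatMap f4) :
    ∃ s : List (Fin 2), IsPrefT (s ++ [1]) ∧ p ++ [0, 1, 1] = (s ++ [1]).flatMap f4 := by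
  obtain ⟨k, hk⟩ : ∃ k, l₁.length = k + 1 := by
    rcases Nat.eq_zero_or_pos l₁.length with h | h
    · rw [List.length_eq_zero_iff] at h
      subst h; simp at hq
    · exact ⟨l₁.length - 1, by omega⟩
  rw [hk, tmPrefix_succ] at hpref
  have h01 : tm k = 0 ∨ tm k = 1 := by omega
  rcases h01 with h | h
  · exfalso
    rw [hpref, bind_append', h] at hq
    have : (p ++ [0, 1]) ++ [1] = ((tmPrefix k).flatMap f4) ++ [0] := by
      simpa [f4] using hq
    exact absurd (concat_cancel this).1 (by decide)
  · refine ⟨tmPrefix k, ?_, ?_⟩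
    · show _ = tmPrefix _
      rw [← h, ← tmPrefix_succ]
      congr 1
      simp [tmPrefix]
    · rw [hq, hpref, h]

/-- The factor `011` occurs in `w4 = f4(t)` only as a suffix of an occurrence
of `f4(1)`: if `p · 011` is a prefix of `w4`, then `p · 011 = f4(s · 1)` for some
prefix `s · 1` of `t`. -/
theorem stmt16 (p : List (Fin 2)) (hp : IsPrefW4 (p ++ [0, 1, 1])) :
    ∃ s : List (Fin 2), IsPrefT (s ++ [1]) ∧ p ++ [0, 1, 1] = (s ++ [1]).flatMap f4 := by
  obtain ⟨n, hq⟩ := hp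
  obtain ⟨l₁, l₂, hsplit, hrest⟩ := decomp _ _ hq
  have hm : l₁.length ≤ n := by
    have := congrArg List.length hsplit
    simp [tmPrefix] at this
    omega
  have hpref : l₁ = tmPrefix l₁.length := by
    rw [← tmPrefix_take hm, hsplit, List.take_left]
  rcases hrest with h | ⟨a, l₂', r, -, hpre, hlen, h⟩
  · exact main_case p l₁ hpref h
  · have h01 : a = 0 ∨ a = 1 := by omega
    rcases h01 with rfl | rfl
    · have hr0 : r = [] := by
        have : r.length < 1 := by simpa [f4] using hlen
        exact List.length_eq_zero_iff.1 (by omega)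
      subst hr0
      rw [List.append_nil] at h
      exact main_case p l₁ hpref h
    · have hr : r = (f4 1).take r.length := List.prefix_iff_eq_take.1 hpre
      have hlen' : r.length < 10 := by simpa [f4] using hlen
      obtain ⟨k, hk⟩ : ∃ k, r.length = k := ⟨_, rfl⟩
      rw [hk] at hr hlen'
      interval_cases k <;> simp [f4] at hr <;> subst hr
      · rw [List.append_nil] at h
        exact main_case p l₁ hpref h
      · exfalso
        have h' : (p ++ [0, 1]) ++ [1] = l₁.flatMap f4 ++ [1] := by simpa using h
        exact bind_ne_suffix01 l₁ ⟨p, (concat_cancel h').2⟩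
      · exfalso
        have h' : (p ++ [0, 1]) ++ [1] = (l₁.flatMap f4 ++ [1]) ++ [0] := by simpa using h
        exact absurd (concat_cancel h').1 (by decide)
      all_goals exact absurd (suffix_right ⟨p, h⟩ (by decide)) (by decide)
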